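/- Let W = {1, s} ≅ ℤ/2 act on X = ℤ² = ℤε₁ ⊕ ℤε₂ by swapping ε₁ and ε₂ (the GL₂ Weyl group), and let F act on X by multiplication by q. Let I ⊂ ℤ[X]^W be the ideal generated by {F(f) − f}. Then B := ℤ[X]^W/I is a free ℤ-module of rank q(q−1), with basis { r((i+j)ε₁ + jε₂) + I : 0 ≤ i ≤ q−1, 0 ≤ j ≤ q−2 }, where r(λ) denotes the W-orbit sum of e(λ). -/

import Mathlib

noncomputable section

/-- The swap involution of the group algebra `ℤ[ℤ²]` induced by `s : ε₁ ↔ ε₂`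
(the `GL₂` Weyl group action). -/
def glSwap : AddMonoidAlgebra ℤ (ℤ × ℤ) ≃ₐ[ℤ] AddMonoidAlgebra ℤ (ℤ × ℤ) :=
  AddMonoidAlgebra.domCongr ℤ ℤ (AddEquiv.prodComm : ℤ × ℤ ≃+ ℤ × ℤ)

/-- The invariant ring `ℤ[X]^W` for `X = ℤ² = ℤε₁ ⊕ ℤε₂` and `W = {1, s}` the swap. -/
def glInv : Subalgebra ℤ (AddMonoidAlgebra ℤ (ℤ × ℤ)) :=
  AlgHom.equalizer glSwap.toAlgHom (AlgHom.id ℤ (AddMonoidAlgebra ℤ (ℤ × ℤ)))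

/-- The `W`-orbit sum `r(λ) = Σ_{μ ∈ Wλ} e(μ) ∈ ℤ[X]^W`. -/
def glR (l : ℤ × ℤ) : AddMonoidAlgebra ℤ (ℤ × ℤ) :=
  ∑ μ ∈ ({l, l.swap} : Finset (ℤ × ℤ)), AddMonoidAlgebra.single μ 1

namespace GL2aux

open AddMonoidAlgebra

abbrev R2 := AddMonoidAlgebra ℤ (ℤ × ℤ)

lemma mem_glInv {f : R2} : f ∈ glInv ↔ glSwap f = f := Iff.rfl

lemma glSwap_single (l : ℤ × ℤ) (c : ℤ) : glSwap (single l c) = single l.swap c := by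
  simpa [glSwap] using AddMonoidAlgebra.domCongr_single ℤ ℤ (AddEquiv.prodComm) l c

lemma glSwap_apply (f : R2) (μ : ℤ × ℤ) : (glSwap f).coeff μ = f.coeff μ.swap := by
  rw [glSwap, AddMonoidAlgebra.coeff_domCongr]
  rfl

lemma glR_def' (l : ℤ × ℤ) (h : l.1 ≠ l.2) :
    glR l = single l 1 + single l.swap 1 := by
  have : l ≠ l.swap := fun he => h (by rw [Prod.ext_iff] at he; exact he.1.trans rfl)
  rw [glR, Finset.sum_pair this]

lemma glR_diag (a : ℤ) : glR (a, a) = single (a, a) 1 := by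
  rw [glR]
  have : ((a,a) : ℤ × ℤ).swap = (a,a) := rfl
  rw [this]
  simp

lemma glR_mem (l : ℤ × ℤ) : glR l ∈ glInv := by
  rcases eq_or_ne l.1 l.2 with h | h
  · have : l = (l.1, l.1) := by rw [Prod.ext_iff]; exact ⟨rfl, h.symm⟩
    rw [mem_glInv, this, glR_diag, glSwap_single]
    rfl
  · rw [mem_glInv, glR_def' l h, map_add, glSwap_single, glSwap_single, Prod.swap_swap,
      add_comm]

lemma glR_swap (l : ℤ × ℤ) : glR l.swap = glR l := by
  rw [glR, glR, Prod.swap_swap, Finset.pair_comm]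

def Ee (j : ℤ) : glInv := ⟨single (j, j) 1, by rw [mem_glInv, glSwap_single]; rfl⟩

def Hh (d : ℕ) : glInv :=
  ⟨single ((d : ℤ), 0) 1 + single (0, (d : ℤ)) 1, by
    rw [mem_glInv, map_add, glSwap_single, glSwap_single]
    exact add_comm _ _⟩

lemma coe_mul (x y : glInv) : ((x * y : glInv) : R2) = (x : R2) * y := rfl

lemma Ee_mul (j k : ℤ) : Ee j * Ee k = Ee (j + k) := by
  apply Subtype.ext
  rw [coe_mul]
  show single (j,j) 1 * single (k,k) 1 = _
  rw [AddMonoidAlgebra.single_mul_single]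
  norm_num
  rfl

lemma Hh_mul (m n : ℕ) (h : n ≤ m) :
    Hh m * Hh n = Hh (m + n) + Ee n * Hh (m - n) := by
  apply Subtype.ext
  rw [coe_mul]
  show ((single ((m:ℤ),0) 1 + single (0,(m:ℤ)) 1) * (single ((n:ℤ),0) 1 + single (0,(n:ℤ)) 1) : R2)
    = (single (((m+n :ℕ):ℤ),0) 1 + single (0,((m+n:ℕ):ℤ)) 1)
      + single ((n:ℤ),(n:ℤ)) 1 * (single (((m-n:ℕ):ℤ),0) 1 + single (0,((m-n:ℕ):ℤ)) 1)
  have hmn : ((m - n : ℕ) : ℤ) = (m : ℤ) - n := by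
    exact_mod_cast Int.ofNat_sub h
  simp only [add_mul, mul_add, AddMonoidAlgebra.single_mul_single, hmn]
  push_cast
  have hm : (n:ℤ) + ((m:ℤ) - n) = (m:ℤ) := by ring
  simp only [Prod.mk_add_mk, add_zero, zero_add, hm]
  abel


def Rho (l : ℤ × ℤ) : glInv := ⟨glR l, glR_mem l⟩

lemma Rho_swap (a b : ℤ) : Rho (a, b) = Rho (b, a) := by
  apply Subtype.ext
  show glR (a,b) = glR (b,a)
  rw [← glR_swap (a,b)]
  rfl

lemma Rho_diag (a : ℤ) : Rho (a, a) = Ee a := Subtype.ext (glR_diag a)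

lemma Hh_zero : Hh 0 = 2 := by
  apply Subtype.ext
  show single ((0:ℤ),(0:ℤ)) 1 + single (0,0) 1 = ((2 : glInv) : R2)
  have h2 : ((2 : glInv) : R2) = 1 + 1 := by
    rw [show (2 : glInv) = 1 + 1 from by norm_num]
    push_cast
    rfl
  rw [h2, AddMonoidAlgebra.one_def]
  rfl

lemma Ee_mul_Hh (b : ℤ) (d : ℕ) (hd : 1 ≤ d) : Ee b * Hh d = Rho (b + d, b) := by
  apply Subtype.ext
  rw [coe_mul]
  show single (b,b) 1 * (single ((d:ℤ),0) 1 + single (0,(d:ℤ)) 1) = glR (b + d, b)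
  have hne : ((b + (d:ℤ), b) : ℤ × ℤ).1 ≠ (b + (d:ℤ), b).2 := by
    simp only []
    omega
  rw [glR_def' _ hne, mul_add, AddMonoidAlgebra.single_mul_single,
    AddMonoidAlgebra.single_mul_single]
  norm_num

lemma glR_apply_self (l : ℤ × ℤ) : (glR l).coeff l = 1 := by
  rcases eq_or_ne l.1 l.2 with h | h
  · have hl : l = (l.1, l.1) := by rw [Prod.ext_iff]; exact ⟨rfl, h.symm⟩
    rw [hl, glR_diag]
    simp
  · rw [glR_def' l h]
    have hne : l.swap ≠ l := fun he => h ((congrArg Prod.fst he) : l.2 = l.1).symm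
    rw [AddMonoidAlgebra.coeff_add, AddMonoidAlgebra.coeff_single, AddMonoidAlgebra.coeff_single,
      Finsupp.add_apply, Finsupp.single_eq_same, Finsupp.single_eq_of_ne' hne, add_zero]

lemma glR_apply_swap (l : ℤ × ℤ) : (glR l).coeff l.swap = 1 := by
  rw [← glR_swap l]
  exact glR_apply_self l.swap

lemma glR_apply_ne (l μ : ℤ × ℤ) (h1 : μ ≠ l) (h2 : μ ≠ l.swap) : (glR l).coeff μ = 0 := by
  rcases eq_or_ne l.1 l.2 with h | h
  · have hl : l = (l.1, l.1) := by rw [Prod.ext_iff]; exact ⟨rfl, h.symm⟩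
    rw [hl] at h1 ⊢
    rw [glR_diag]
    exact Finsupp.single_eq_of_ne' (by simpa using (Ne.symm h1))
  · rw [glR_def' l h, AddMonoidAlgebra.coeff_add, AddMonoidAlgebra.coeff_single,
      AddMonoidAlgebra.coeff_single, Finsupp.add_apply, Finsupp.single_eq_of_ne' (Ne.symm h1),
      Finsupp.single_eq_of_ne' (Ne.symm h2), add_zero]

lemma mapDomain_glR (q : ℕ) (hq0 : q ≠ 0) (l : ℤ × ℤ) :
    Finsupp.mapDomain (fun l : ℤ × ℤ => (q:ℤ) • l) (glR l).coeff = (glR ((q:ℤ) • l)).coeff := by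
  have hsm : ∀ μ : ℤ × ℤ, (q:ℤ) • μ = ((q:ℤ) * μ.1, (q:ℤ) * μ.2) := fun μ => rfl
  rcases eq_or_ne l.1 l.2 with h | h
  · have hl : l = (l.1, l.1) := by rw [Prod.ext_iff]; exact ⟨rfl, h.symm⟩
    rw [hl, glR_diag, AddMonoidAlgebra.coeff_single, Finsupp.mapDomain_single,
      show (q:ℤ) • ((l.1, l.1) : ℤ × ℤ) = ((q:ℤ) * l.1, (q:ℤ) * l.1) from rfl, glR_diag,
      AddMonoidAlgebra.coeff_single]
  · have h2 : ((q:ℤ) • l).1 ≠ ((q:ℤ) • l).2 := by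
      rw [hsm]
      intro he
      exact h (mul_left_cancel₀ (by exact_mod_cast hq0) he)
    rw [glR_def' l h, glR_def' _ h2]
    simp only [AddMonoidAlgebra.coeff_add, AddMonoidAlgebra.coeff_single]
    rw [Finsupp.mapDomain_add, Finsupp.mapDomain_single,
      Finsupp.mapDomain_single]
    rfl

lemma span_aux : ∀ (N : ℕ) (f : R2), glSwap f = f → f.coeff.support.card ≤ N →
    f ∈ Submodule.span ℤ (Set.range glR) := by
  intro N
  induction N with
  | zero =>
    intro f hf hc
    have : f = 0 := by
      rw [← AddMonoidAlgebra.coeff_eq_zero, ← Finsupp.support_eq_empty]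
      exact Finset.card_eq_zero.mp (Nat.le_antisymm hc (Nat.zero_le _))
    rw [this]
    exact Submodule.zero_mem _
  | succ N ih =>
    intro f hf hc
    rcases eq_or_ne f 0 with rfl | hne
    · exact Submodule.zero_mem _
    · obtain ⟨l, hl⟩ := Finsupp.support_nonempty_iff.mpr (mt AddMonoidAlgebra.coeff_eq_zero.mp hne)
      have hsym : ∀ μ : ℤ × ℤ, f.coeff μ.swap = f.coeff μ := by
        intro μ
        have h2 := glSwap_apply f μ
        rw [hf] at h2
        exact h2.symm
      set c := f.coeff l with hcdef
      set g := f - c • glR l with hg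
      have hgl : g.coeff l = 0 := by
        rw [hg, AddMonoidAlgebra.coeff_sub, AddMonoidAlgebra.coeff_smul, Finsupp.sub_apply, Finsupp.smul_apply, glR_apply_self, smul_eq_mul,
          mul_one, sub_self]
      have hgsw : g.coeff l.swap = 0 := by
        rw [hg, AddMonoidAlgebra.coeff_sub, AddMonoidAlgebra.coeff_smul, Finsupp.sub_apply, Finsupp.smul_apply, glR_apply_swap, smul_eq_mul,
          mul_one, hsym l, sub_self]
      have hgsupp : g.coeff.support ⊆ f.coeff.support.erase l := by
        intro μ hμ
        rw [Finsupp.mem_support_iff] at hμ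
        rcases eq_or_ne μ l with rfl | h1
        · exact absurd hgl hμ
        rcases eq_or_ne μ l.swap with rfl | h2
        · exact absurd hgsw hμ
        have : g.coeff μ = f.coeff μ := by
          rw [hg, AddMonoidAlgebra.coeff_sub, AddMonoidAlgebra.coeff_smul, Finsupp.sub_apply, Finsupp.smul_apply, glR_apply_ne l μ h1 h2,
            smul_zero, sub_zero]
        rw [this] at hμ
        exact Finset.mem_erase.mpr ⟨h1, Finsupp.mem_support_iff.mpr hμ⟩
      have hgsym : glSwap g = g := by
        rw [hg, map_sub, hf, map_smul, mem_glInv.mp (glR_mem l)]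
      have hcard : g.coeff.support.card ≤ N := by
        have := Finset.card_le_card hgsupp
        rw [Finset.card_erase_of_mem hl] at this
        omega
      have hmem := ih g hgsym hcard
      have : f = g + c • glR l := by rw [hg, sub_add_cancel]
      rw [this]
      exact Submodule.add_mem _ hmem
        (Submodule.smul_mem _ _ (Submodule.subset_span ⟨l, rfl⟩))

lemma mem_span_rho (x : glInv) : x ∈ Submodule.span ℤ (Set.range Rho) := by
  have h1 : (x : R2) ∈ Submodule.span ℤ (Set.range glR) :=
    span_aux _ x (mem_glInv.mp x.2) le_rfl
  have h2 : Set.range glR = glInv.val.toLinearMap '' Set.range Rho := by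
    rw [← Set.range_comp]
    rfl
  rw [h2, ← Submodule.map_span] at h1
  obtain ⟨y, hy, hyx⟩ := h1
  have : y = x := Subtype.ext hyx
  rwa [← this]

open Polynomial AdjoinRoot


lemma newton {D : Type*} [CommRing D] (x y u v : D) (hs : u + v = x + y)
    (hp : u * v = x * y) : ∀ m : ℕ, u ^ m + v ^ m = x ^ m + y ^ m := by
  intro m
  induction m using Nat.strong_induction_on with
  | _ m ih =>
    match m, ih with
    | 0, _ => simp
    | 1, _ => simpa using hs
    | (k+2), ih =>
      have h1 := ih (k+1) (by omega)
      have h2 := ih k (by omega)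
      have e1 : u^(k+2) + v^(k+2) = (u+v)*(u^(k+1)+v^(k+1)) - (u*v)*(u^k+v^k) := by ring
      have e2 : x^(k+2) + y^(k+2) = (x+y)*(x^(k+1)+y^(k+1)) - (x*y)*(x^k+y^k) := by ring
      rw [e1, e2, hs, hp, h1, h2]

variable (q : ℕ)

abbrev Agl := AddMonoidAlgebra ℤ (ZMod (q-1))

def εA : Agl q := AddMonoidAlgebra.single 1 1

def εAinv : Agl q := AddMonoidAlgebra.single (-1) 1

lemma εA_mul_inv : εA q * εAinv q = 1 := by
  rw [εA, εAinv, AddMonoidAlgebra.single_mul_single]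
  norm_num
  rw [AddMonoidAlgebra.one_def]

def gpoly : Polynomial (Agl q) :=
  X^(2*q) - X^(q+1) - C (εA q) * X^(q-1) + C ((εA q)^q)

lemma gpoly_eq : gpoly q = X^(2*q) + (- (X^(q+1)) - C (εA q) * X^(q-1) + C ((εA q)^q)) := by
  rw [gpoly]; ring

lemma gpoly_rest_degree (hq : 2 ≤ q) :
    (- (X^(q+1) : Polynomial (Agl q)) - C (εA q) * X^(q-1) + C ((εA q)^q)).degree
      < ((2*q : ℕ) : WithBot ℕ) := by
  apply lt_of_le_of_lt (degree_add_le _ _)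
  rw [max_lt_iff]
  constructor
  · apply lt_of_le_of_lt (degree_sub_le _ _)
    rw [max_lt_iff]
    constructor
    · rw [degree_neg, degree_X_pow]
      exact_mod_cast by omega
    · apply lt_of_le_of_lt (degree_mul_le _ _)
      apply lt_of_le_of_lt (add_le_add degree_C_le (degree_X_pow (R := Agl q) (q-1)).le)
      rw [zero_add]
      exact_mod_cast by omega
  · apply lt_of_le_of_lt degree_C_le
    exact_mod_cast by omega

lemma gpoly_monic (hq : 2 ≤ q) : (gpoly q).Monic := by
  rw [gpoly_eq]
  exact monic_X_pow_add (gpoly_rest_degree q hq)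

lemma gpoly_natDegree (hq : 2 ≤ q) : (gpoly q).natDegree = 2*q := by
  have hdeg : (gpoly q).degree = (2*q : ℕ) := by
    rw [gpoly_eq]
    rw [degree_add_eq_left_of_degree_lt]
    · exact degree_X_pow _
    · rw [degree_X_pow]
      exact gpoly_rest_degree q hq
  exact natDegree_eq_of_degree_eq_some hdeg

abbrev Dgl := AdjoinRoot (gpoly q)

lemma root_rel :
    (root (gpoly q))^(2*q) - (root (gpoly q))^(q+1)
      - (of (gpoly q)) (εA q) * (root (gpoly q))^(q-1) + ((of (gpoly q)) (εA q))^q = 0 := by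
  have h : eval₂ (of (gpoly q)) (root (gpoly q))
      (X^(2*q) - X^(q+1) - C (εA q) * X^(q-1) + C ((εA q)^q)) = 0 :=
    AdjoinRoot.eval₂_root (gpoly q)
  simpa [eval₂_add, eval₂_sub, eval₂_mul, eval₂_pow, eval₂_X, eval₂_C, map_pow] using h

def Xu (hq : 2 ≤ q) : (Dgl q)ˣ :=
  Units.mkOfMulEqOne (root (gpoly q))
    (((of (gpoly q)) (εAinv q))^q *
      ((root (gpoly q))^q + (of (gpoly q)) (εA q) * (root (gpoly q))^(q-2)
        - (root (gpoly q))^(2*q-1)))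
    (by
      set r := root (gpoly q)
      set e := (of (gpoly q)) (εA q)
      set e' := (of (gpoly q)) (εAinv q)
      have hee : e * e' = 1 := by
        rw [← map_mul, εA_mul_inv, map_one]
      have key : r * (r^q + e * r^(q-2) - r^(2*q-1)) = e^q := by
        have hq' := hq
        have REL := root_rel q
        set b := r^(q-2) with hb
        have h1 : r^(q-1) = r * b := by rw [hb, ← pow_succ']; congr 1; omega
        have h2 : r^q = r * (r * b) := by rw [← h1, ← pow_succ']; congr 1; omega
        have h3 : r^(q+1) = r * (r * (r * b)) := by rw [← h2, ← pow_succ']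
        have h4 : r^(2*q-1) = (r * (r * b)) * (r * b) := by
          rw [← h2, ← h1, ← pow_add]; congr 1; omega
        have h5 : r^(2*q) = r * ((r * (r * b)) * (r * b)) := by
          rw [← h4, ← pow_succ']; congr 1; omega
        rw [h5, h3, h1] at REL
        rw [h2, h4]
        linear_combination -REL
      calc r * (e'^q * (r^q + e * r^(q-2) - r^(2*q-1)))
          = e'^q * (r * (r^q + e * r^(q-2) - r^(2*q-1))) := by ring
        _ = e'^q * e^q := by rw [key]
        _ = (e' * e)^q := by rw [mul_pow]
        _ = 1 := by rw [mul_comm, hee, one_pow])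

lemma Xu_val (hq : 2 ≤ q) : ((Xu q hq) : Dgl q) = root (gpoly q) := rfl

def Eu : (Dgl q)ˣ :=
  Units.map (of (gpoly q)).toMonoidHom
    ⟨εA q, εAinv q, εA_mul_inv q, by rw [mul_comm]; exact εA_mul_inv q⟩

lemma Eu_val : ((Eu q) : Dgl q) = (of (gpoly q)) (εA q) := rfl

def Yu (hq : 2 ≤ q) : (Dgl q)ˣ := Eu q * (Xu q hq)⁻¹

lemma Xu_mul_Yu (hq : 2 ≤ q) : Xu q hq * Yu q hq = Eu q := by
  rw [Yu, mul_comm (Eu q), ← mul_assoc, mul_inv_cancel, one_mul]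

lemma Eu_pow_sub_one : (Eu q)^(q-1) = 1 := by
  have h : (εA q)^(q-1) = 1 := by
    rw [εA, AddMonoidAlgebra.single_pow, one_pow, AddMonoidAlgebra.one_def]
    congr 1
    rw [nsmul_eq_mul, mul_one]
    exact ZMod.natCast_self _
  apply Units.ext
  rw [Units.val_pow_eq_pow_val, Eu_val, ← map_pow, h, map_one, Units.val_one]

lemma Eu_pow_q (hq : 2 ≤ q) : (Eu q)^q = Eu q := by
  have h : (Eu q)^q = (Eu q)^(q-1) * (Eu q)^1 := by
    rw [← pow_add]
    congr 1
    omega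
  rw [h, Eu_pow_sub_one q, pow_one, one_mul]


section
variable (hq : 2 ≤ q)

lemma keyRel : ((Xu q hq ^ q : (Dgl q)ˣ) : Dgl q) + ((Yu q hq ^ q : (Dgl q)ˣ) : Dgl q)
    = ((Xu q hq : (Dgl q)ˣ) : Dgl q) + ((Yu q hq : (Dgl q)ˣ) : Dgl q) := by
  apply (IsUnit.mul_right_injective ((Xu q hq ^q).isUnit))
  show ((Xu q hq ^q : (Dgl q)ˣ) : Dgl q) * _ = ((Xu q hq ^q : (Dgl q)ˣ) : Dgl q) * _
  have e1 : q + q = 2*q := by ring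
  have h1 : ((Xu q hq^q : (Dgl q)ˣ) : Dgl q) * (↑(Xu q hq^q) + ↑(Yu q hq^q))
      = ↑(Xu q hq^(2*q)) + ↑(Eu q ^ q) := by
    rw [mul_add, ← Units.val_mul, ← Units.val_mul, ← pow_add, e1, ← mul_pow, Xu_mul_Yu]
  have e2 : (q-1) + 1 = q := by omega
  have h2 : ((Xu q hq^q : (Dgl q)ˣ) : Dgl q) * (↑(Xu q hq) + ↑(Yu q hq))
      = ↑(Xu q hq^(q+1)) + ↑(Xu q hq^(q-1) * Eu q) := by
    rw [mul_add, ← Units.val_mul, ← Units.val_mul, ← pow_succ]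
    congr 2
    have h3 : Xu q hq ^ q = Xu q hq^(q-1) * Xu q hq := by
      rw [← pow_succ]
      congr 1
      omega
    rw [h3, mul_assoc, Xu_mul_Yu]
  rw [h1, h2]
  have hE : ((Eu q ^ q : (Dgl q)ˣ) : Dgl q) = ((of (gpoly q)) (εA q))^q := by
    rw [Units.val_pow_eq_pow_val, Eu_val]
  have hX : ∀ k : ℕ, ((Xu q hq^k : (Dgl q)ˣ) : Dgl q) = (root (gpoly q))^k := by
    intro k
    rw [Units.val_pow_eq_pow_val, Xu_val]
  have hXE : ((Xu q hq^(q-1) * Eu q : (Dgl q)ˣ) : Dgl q)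
      = (of (gpoly q)) (εA q) * (root (gpoly q))^(q-1) := by
    rw [Units.val_mul, hX, Eu_val, mul_comm]
  rw [hE, hX, hX, hXE]
  linear_combination root_rel q

lemma NQ (d : ℕ) : ((Xu q hq ^ (q*d) : (Dgl q)ˣ) : Dgl q) + ((Yu q hq ^ (q*d) : (Dgl q)ˣ) : Dgl q)
    = ((Xu q hq ^ d : (Dgl q)ˣ) : Dgl q) + ((Yu q hq ^ d : (Dgl q)ˣ) : Dgl q) := by
  have hp : ((Xu q hq : Dgl q))^q * ((Yu q hq : Dgl q))^q
      = (Xu q hq : Dgl q) * (Yu q hq : Dgl q) := by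
    rw [← Units.val_pow_eq_pow_val, ← Units.val_pow_eq_pow_val, ← Units.val_mul,
      ← Units.val_mul, ← mul_pow, Xu_mul_Yu, Eu_pow_q q hq]
  have hs : ((Xu q hq : Dgl q))^q + ((Yu q hq : Dgl q))^q
      = (Xu q hq : Dgl q) + (Yu q hq : Dgl q) := by
    rw [← Units.val_pow_eq_pow_val, ← Units.val_pow_eq_pow_val]
    exact keyRel q hq
  have := newton (Xu q hq : Dgl q) (Yu q hq : Dgl q)
    (((Xu q hq : Dgl q))^q) (((Yu q hq : Dgl q))^q) hs hp d
  rw [← pow_mul, ← pow_mul] at this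
  rw [Units.val_pow_eq_pow_val, Units.val_pow_eq_pow_val,
    Units.val_pow_eq_pow_val, Units.val_pow_eq_pow_val]
  exact this

lemma Zb (b : ℤ) : (Xu q hq * Yu q hq)^((q:ℤ)*b) = (Xu q hq * Yu q hq)^b := by
  rw [Xu_mul_Yu]
  have h : (q : ℤ) * b = b + ((q - 1 : ℕ) : ℤ) * b := by
    push_cast [Nat.cast_sub (by omega : 1 ≤ q)]
    ring
  rw [h, zpow_add, zpow_mul, zpow_natCast, Eu_pow_sub_one, one_zpow, mul_one]

lemma shift_form (c : ℤ) (d : ℕ) :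
    ((Xu q hq ^ (c + (d:ℤ)) * Yu q hq ^ c : (Dgl q)ˣ) : Dgl q)
      + ((Xu q hq ^ c * Yu q hq ^ (c + (d:ℤ)) : (Dgl q)ˣ) : Dgl q)
    = ((((Xu q hq * Yu q hq)^c : (Dgl q)ˣ) : Dgl q)) *
      (((Xu q hq ^ d : (Dgl q)ˣ) : Dgl q) + ((Yu q hq ^ d : (Dgl q)ˣ) : Dgl q)) := by
  have h1 : Xu q hq ^ (c + (d:ℤ)) * Yu q hq ^ c = (Xu q hq * Yu q hq)^c * Xu q hq^d := by
    rw [zpow_add, mul_zpow, zpow_natCast, mul_right_comm]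
  have h2 : Xu q hq ^ c * Yu q hq ^ (c + (d:ℤ)) = (Xu q hq * Yu q hq)^c * Yu q hq^d := by
    rw [zpow_add, mul_zpow, zpow_natCast, ← mul_assoc]
  rw [h1, h2, Units.val_mul, Units.val_mul, mul_add]

lemma MID (a b : ℤ) :
    ((Xu q hq ^ ((q:ℤ)*a) * Yu q hq ^ ((q:ℤ)*b) : (Dgl q)ˣ) : Dgl q)
      + ((Xu q hq ^ ((q:ℤ)*b) * Yu q hq ^ ((q:ℤ)*a) : (Dgl q)ˣ) : Dgl q)
    = ((Xu q hq ^ a * Yu q hq ^ b : (Dgl q)ˣ) : Dgl q)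
      + ((Xu q hq ^ b * Yu q hq ^ a : (Dgl q)ˣ) : Dgl q) := by
  suffices H : ∀ a b : ℤ, b ≤ a →
      ((Xu q hq ^ ((q:ℤ)*a) * Yu q hq ^ ((q:ℤ)*b) : (Dgl q)ˣ) : Dgl q)
      + ((Xu q hq ^ ((q:ℤ)*b) * Yu q hq ^ ((q:ℤ)*a) : (Dgl q)ˣ) : Dgl q)
    = ((Xu q hq ^ a * Yu q hq ^ b : (Dgl q)ˣ) : Dgl q)
      + ((Xu q hq ^ b * Yu q hq ^ a : (Dgl q)ˣ) : Dgl q) by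
    rcases le_total b a with h | h
    · exact H a b h
    · have := H b a h
      rw [add_comm, this, add_comm]
  intro a b hba
  obtain ⟨d, hd⟩ : ∃ d : ℕ, a = b + (d : ℤ) := ⟨(a - b).toNat, by omega⟩
  subst hd
  have hqd : (q:ℤ) * (b + (d:ℤ)) = (q:ℤ)*b + ((q*d : ℕ) : ℤ) := by push_cast; ring
  rw [hqd, shift_form q hq, shift_form q hq, Zb q hq, NQ q hq]


def phiu : Multiplicative (ℤ × ℤ) →* Dgl q where
  toFun := fun l => ((Xu q hq ^ (Multiplicative.toAdd l).1
    * Yu q hq ^ (Multiplicative.toAdd l).2 : (Dgl q)ˣ) : Dgl q)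
  map_one' := by
    simp
  map_mul' := by
    intro l m
    simp only [toAdd_mul, Prod.fst_add, Prod.snd_add]
    rw [← Units.val_mul]
    congr 1
    rw [zpow_add, zpow_add, mul_mul_mul_comm]

def psigl : R2 →ₐ[ℤ] Dgl q := AddMonoidAlgebra.lift ℤ (Dgl q) (ℤ × ℤ) (phiu q hq)

lemma psi_single (l : ℤ × ℤ) (c : ℤ) :
    psigl q hq (AddMonoidAlgebra.single l c)
      = c • ((Xu q hq ^ l.1 * Yu q hq ^ l.2 : (Dgl q)ˣ) : Dgl q) := by
  rw [psigl, AddMonoidAlgebra.lift_single]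
  rfl

lemma psi_glR_offdiag (l : ℤ × ℤ) (h : l.1 ≠ l.2) :
    psigl q hq (glR l) = ((Xu q hq ^ l.1 * Yu q hq ^ l.2 : (Dgl q)ˣ) : Dgl q)
      + ((Xu q hq ^ l.2 * Yu q hq ^ l.1 : (Dgl q)ˣ) : Dgl q) := by
  rw [glR_def' l h, map_add, psi_single, psi_single, one_smul, one_smul]
  rfl

lemma psi_glR_diag (a : ℤ) :
    psigl q hq (glR (a, a)) = (((Xu q hq * Yu q hq) ^ a : (Dgl q)ˣ) : Dgl q) := by
  rw [glR_diag, psi_single, one_smul, mul_zpow]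

lemma CFE' (l : ℤ × ℤ) : psigl q hq (glR ((q:ℤ) • l)) = psigl q hq (glR l) := by
  have hsm : (q:ℤ) • l = ((q:ℤ) * l.1, (q:ℤ) * l.2) := rfl
  rcases eq_or_ne l.1 l.2 with h | h
  · have hl : l = (l.1, l.1) := by rw [Prod.ext_iff]; exact ⟨rfl, h.symm⟩
    rw [hl] at hsm ⊢
    rw [hsm, psi_glR_diag, psi_glR_diag]
    exact congrArg _ (Zb q hq l.1)
  · have h2 : ((q:ℤ) * l.1) ≠ ((q:ℤ) * l.2) := by
      intro he
      exact h (mul_left_cancel₀ (by positivity) he)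
    rw [hsm, psi_glR_offdiag q hq _ h2, psi_glR_offdiag q hq _ h]
    exact MID q hq l.1 l.2

lemma psi_r0 (j : ℕ) : psigl q hq (glR ((j:ℤ), (j:ℤ)))
    = (of (gpoly q)) ((εA q)^j) := by
  rw [psi_glR_diag, Xu_mul_Yu, zpow_natCast]
  rw [Units.val_pow_eq_pow_val, Eu_val, map_pow]

lemma psi_r (i j : ℕ) (hi : 1 ≤ i) :
    psigl q hq (glR (((i:ℤ) + (j:ℤ)), (j:ℤ)))
      = (of (gpoly q)) ((εA q)^j)
        * (((Xu q hq ^ i : (Dgl q)ˣ) : Dgl q) + ((Yu q hq ^ i : (Dgl q)ˣ) : Dgl q)) := by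
  have h : (((i:ℤ) + (j:ℤ), (j:ℤ)) : ℤ × ℤ).1 ≠ ((i:ℤ) + (j:ℤ), (j:ℤ)).2 := by
    simp only []
    omega
  rw [psi_glR_offdiag q hq _ h]
  have hc : ((i:ℤ) + (j:ℤ)) = (j:ℤ) + ((i:ℕ):ℤ) := by ring
  calc ((Xu q hq ^ ((i:ℤ)+(j:ℤ)) * Yu q hq ^ (j:ℤ) : (Dgl q)ˣ) : Dgl q)
      + ((Xu q hq ^ (j:ℤ) * Yu q hq ^ ((i:ℤ)+(j:ℤ)) : (Dgl q)ˣ) : Dgl q)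
      = ((((Xu q hq * Yu q hq)^(j:ℤ) : (Dgl q)ˣ) : Dgl q)) *
        (((Xu q hq ^ i : (Dgl q)ˣ) : Dgl q) + ((Yu q hq ^ i : (Dgl q)ˣ) : Dgl q)) := by
        rw [hc]
        exact shift_form q hq (j:ℤ) i
    _ = (of (gpoly q)) ((εA q)^j)
        * (((Xu q hq ^ i : (Dgl q)ˣ) : Dgl q) + ((Yu q hq ^ i : (Dgl q)ˣ) : Dgl q)) := by
        rw [Xu_mul_Yu, zpow_natCast, Units.val_pow_eq_pow_val, Eu_val, map_pow]

def pb : PowerBasis (Agl q) (Dgl q) := AdjoinRoot.powerBasis' (gpoly_monic q hq)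

lemma pb_dim : (pb q hq).dim = 2*q := by
  rw [pb, AdjoinRoot.powerBasis'_dim, gpoly_natDegree q hq]

lemma repr_of_mul_pow (a : Agl q) (k : ℕ) (hk : k < (pb q hq).dim) :
    (pb q hq).basis.repr ((of (gpoly q)) a * (root (gpoly q))^k)
      = Finsupp.single (⟨k, hk⟩ : Fin (pb q hq).dim) a := by
  have hgen : (pb q hq).gen = root (gpoly q) := by
    rw [pb, AdjoinRoot.powerBasis'_gen]
  have h1 : (of (gpoly q)) a * (root (gpoly q))^k
      = a • ((pb q hq).basis (⟨k, hk⟩ : Fin (pb q hq).dim)) := by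
    rw [(pb q hq).basis_eq_pow (⟨k, hk⟩ : Fin (pb q hq).dim), hgen, Algebra.smul_def,
      AdjoinRoot.algebraMap_eq]
  rw [h1, map_smul, Module.Basis.repr_self, Finsupp.smul_single, smul_eq_mul, mul_one]

lemma εA_pow (j : ℕ) : (εA q)^j = AddMonoidAlgebra.single ((j : ZMod (q-1))) 1 := by
  rw [εA, AddMonoidAlgebra.single_pow, one_pow]
  congr 1
  rw [nsmul_eq_mul, mul_one]

lemma zmod_cast_inj (a b : ℕ) (ha : a < q-1) (hb : b < q-1) :
    ((a : ZMod (q-1)) = (b : ZMod (q-1))) ↔ a = b := by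
  rw [ZMod.natCast_eq_natCast_iff]
  unfold Nat.ModEq
  rw [Nat.mod_eq_of_lt ha, Nat.mod_eq_of_lt hb]

lemma uw_repr0 (j : ℕ) :
    (pb q hq).basis.repr (((Xu q hq ^ (q-1) : (Dgl q)ˣ) : Dgl q)
        * psigl q hq (glR ((j:ℤ), (j:ℤ))))
      = Finsupp.single (⟨q-1, by rw [pb_dim]; omega⟩ : Fin (pb q hq).dim) ((εA q)^j) := by
  rw [psi_r0, mul_comm, Units.val_pow_eq_pow_val, Xu_val]
  exact repr_of_mul_pow q hq _ _ _

lemma uw_repr (i j : ℕ) (h1 : 1 ≤ i) (h2 : i ≤ q-1) :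
    (pb q hq).basis.repr (((Xu q hq ^ (q-1) : (Dgl q)ˣ) : Dgl q)
        * psigl q hq (glR (((i:ℤ) + (j:ℤ)), (j:ℤ))))
      = Finsupp.single (⟨q-1+i, by rw [pb_dim]; omega⟩ : Fin (pb q hq).dim) ((εA q)^j)
        + Finsupp.single (⟨q-1-i, by rw [pb_dim]; omega⟩ : Fin (pb q hq).dim) ((εA q)^(i+j)) := by
  rw [psi_r q hq i j h1]
  have hXX : ((Xu q hq ^ (q-1) : (Dgl q)ˣ) : Dgl q) * ((Xu q hq ^ i : (Dgl q)ˣ) : Dgl q)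
      = (root (gpoly q))^(q-1+i) := by
    rw [← Units.val_mul, ← pow_add, Units.val_pow_eq_pow_val, Xu_val]
  have hXY : ((Xu q hq ^ (q-1) : (Dgl q)ˣ) : Dgl q) * ((Yu q hq ^ i : (Dgl q)ˣ) : Dgl q)
      = (of (gpoly q)) ((εA q)^i) * (root (gpoly q))^(q-1-i) := by
    rw [← Units.val_mul]
    have hu : Xu q hq ^ (q-1) * Yu q hq ^ i = Eu q ^ i * Xu q hq ^ (q-1-i) := by
      have hsplit : Xu q hq ^ (q-1) = Xu q hq^(q-1-i) * Xu q hq^i := by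
        rw [← pow_add]
        congr 1
        omega
      rw [hsplit, mul_assoc, ← mul_pow, Xu_mul_Yu, mul_comm]
    rw [hu, Units.val_mul, Units.val_pow_eq_pow_val, Eu_val, ← map_pow,
      Units.val_pow_eq_pow_val, Xu_val]
  have expand : ((Xu q hq ^ (q-1) : (Dgl q)ˣ) : Dgl q) * ((of (gpoly q)) ((εA q)^j)
        * (((Xu q hq ^ i : (Dgl q)ˣ) : Dgl q) + ((Yu q hq ^ i : (Dgl q)ˣ) : Dgl q)))
      = (of (gpoly q)) ((εA q)^j) * (root (gpoly q))^(q-1+i)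
        + (of (gpoly q)) ((εA q)^(i+j)) * (root (gpoly q))^(q-1-i) := by
    rw [mul_add, mul_add]
    congr 1
    · rw [← hXX]; ring
    · rw [show ((Xu q hq ^ (q-1) : (Dgl q)ˣ) : Dgl q) * ((of (gpoly q)) ((εA q)^j)
          * ((Yu q hq ^ i : (Dgl q)ˣ) : Dgl q))
          = (of (gpoly q)) ((εA q)^j)
            * (((Xu q hq ^ (q-1) : (Dgl q)ˣ) : Dgl q) * ((Yu q hq ^ i : (Dgl q)ˣ) : Dgl q))
          from by ring, hXY, ← mul_assoc, ← map_mul, ← pow_add,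
        show j + i = i + j from by ring]
  rw [expand, map_add, repr_of_mul_pow q hq _ _ _, repr_of_mul_pow q hq _ _ _]

def coordθ (p : Fin q × Fin (q-1)) : Dgl q →+ ℤ where
  toFun z := ((pb q hq).basis.repr z
    (⟨q-1+(p.1 : ℕ), by rw [pb_dim]; have := p.1.isLt; omega⟩ : Fin (pb q hq).dim)).coeff
    (((p.2 : ℕ) : ZMod (q-1)))
  map_zero' := by simp
  map_add' := by
    intro x y
    show (((pb q hq).basis.repr (x+y)) _).coeff _ = (((pb q hq).basis.repr x) _).coeff _
      + (((pb q hq).basis.repr y) _).coeff _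
    rw [map_add, Finsupp.add_apply, AddMonoidAlgebra.coeff_add]
    exact Finsupp.add_apply _ _ _

lemma coord_eval (p : Fin q × Fin (q-1)) (i : Fin q) (j : Fin (q-1)) :
    coordθ q hq p (((Xu q hq ^ (q-1) : (Dgl q)ˣ) : Dgl q)
        * psigl q hq (glR ((((i:ℕ):ℤ) + ((j:ℕ):ℤ)), ((j:ℕ):ℤ))))
      = if p = (i, j) then 1 else 0 := by
  have hij : (((p.2 : ℕ) : ZMod (q-1)) = ((j : ℕ) : ZMod (q-1))) ↔ (p.2 : ℕ) = (j : ℕ) :=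
    zmod_cast_inj q (p.2 : ℕ) (j : ℕ) p.2.isLt j.isLt
  rcases Nat.eq_zero_or_pos (i : ℕ) with hi | hi
  · have h0 : (((i:ℕ):ℤ) + ((j:ℕ):ℤ)) = ((j:ℕ):ℤ) := by rw [hi]; ring
    rw [show coordθ q hq p (((Xu q hq ^ (q-1) : (Dgl q)ˣ) : Dgl q)
        * psigl q hq (glR ((((i:ℕ):ℤ) + ((j:ℕ):ℤ)), ((j:ℕ):ℤ)))) =
      ((pb q hq).basis.repr (((Xu q hq ^ (q-1) : (Dgl q)ˣ) : Dgl q)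
        * psigl q hq (glR ((((i:ℕ):ℤ) + ((j:ℕ):ℤ)), ((j:ℕ):ℤ))))
        (⟨q-1+(p.1 : ℕ), by rw [pb_dim]; have := p.1.isLt; omega⟩ : Fin (pb q hq).dim)).coeff
        (((p.2 : ℕ) : ZMod (q-1))) from rfl]
    rw [h0, uw_repr0 q hq]
    rw [Finsupp.single_apply]
    by_cases hp1 : (p.1 : ℕ) = 0
    · have : (⟨q-1, by rw [pb_dim]; omega⟩ : Fin (pb q hq).dim)
          = ⟨q-1+(p.1 : ℕ), by rw [pb_dim]; have := p.1.isLt; omega⟩ := by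
        apply Fin.ext
        simp [hp1]
      rw [if_pos this, εA_pow, AddMonoidAlgebra.coeff_single, Finsupp.single_apply]
      by_cases hp2 : (j : ℕ) = (p.2 : ℕ)
      · rw [if_pos (by exact_mod_cast congrArg _ hp2), if_pos]
        have hpe : p = (i, j) := by
          obtain ⟨p1, p2⟩ := p
          simp only [Prod.mk.injEq]
          refine ⟨Fin.ext ?_, Fin.ext ?_⟩ <;> simp only [] at hp1 hp2 ⊢ <;> omega
        exact hpe ▸ rfl
      · rw [if_neg (fun h => hp2 ((zmod_cast_inj q _ _ j.isLt p.2.isLt).mp h)), if_neg]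
        intro hpe
        rw [hpe] at hp2
        exact hp2 rfl
    · have hne : (⟨q-1, by rw [pb_dim]; omega⟩ : Fin (pb q hq).dim)
          ≠ ⟨q-1+(p.1 : ℕ), by rw [pb_dim]; have := p.1.isLt; omega⟩ := by
        intro h
        have := Fin.mk.injEq .. ▸ h
        simp only [Fin.mk.injEq] at h
        omega
      rw [if_neg hne]
      rw [if_neg (by
        intro hpe
        rw [hpe] at hp1
        exact hp1 (by simpa using hi))]
      rfl
  · have hle : (i:ℕ) ≤ q-1 := by have := i.isLt; omega
    rw [show coordθ q hq p (((Xu q hq ^ (q-1) : (Dgl q)ˣ) : Dgl q)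
        * psigl q hq (glR ((((i:ℕ):ℤ) + ((j:ℕ):ℤ)), ((j:ℕ):ℤ)))) =
      ((pb q hq).basis.repr (((Xu q hq ^ (q-1) : (Dgl q)ˣ) : Dgl q)
        * psigl q hq (glR ((((i:ℕ):ℤ) + ((j:ℕ):ℤ)), ((j:ℕ):ℤ))))
        (⟨q-1+(p.1 : ℕ), by rw [pb_dim]; have := p.1.isLt; omega⟩ : Fin (pb q hq).dim)).coeff
        (((p.2 : ℕ) : ZMod (q-1))) from rfl]
    rw [uw_repr q hq (i:ℕ) (j:ℕ) hi hle, Finsupp.add_apply, Finsupp.single_apply,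
      Finsupp.single_apply]
    have hne2 : (⟨q-1-(i:ℕ), by rw [pb_dim]; omega⟩ : Fin (pb q hq).dim)
        ≠ ⟨q-1+(p.1:ℕ), by rw [pb_dim]; have := p.1.isLt; omega⟩ := by
      intro h
      simp only [Fin.mk.injEq] at h
      omega
    rw [if_neg hne2, add_zero]
    by_cases hp1 : (p.1:ℕ) = (i:ℕ)
    · rw [if_pos (Fin.ext (by show q-1+(i:ℕ) = q-1+(p.1:ℕ); omega))]
      rw [εA_pow, AddMonoidAlgebra.coeff_single, Finsupp.single_apply]
      by_cases hp2 : (p.2:ℕ) = (j:ℕ)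
      · rw [if_pos (by rw [hp2]), if_pos (by
          obtain ⟨p1, p2⟩ := p
          simp only [Prod.mk.injEq]
          simp only [] at hp1 hp2
          exact ⟨Fin.ext (by omega), Fin.ext (by omega)⟩)]
      · rw [if_neg (fun h => hp2 ((zmod_cast_inj q _ _ j.isLt p.2.isLt).mp h).symm),
          if_neg (fun h => hp2 (by rw [h]))]
    · rw [if_neg (by
        intro h
        simp only [Fin.mk.injEq] at h
        omega), if_neg (fun h => hp1 (by rw [h]))]
      exact Finsupp.zero_apply


end
end GL2aux

set_option maxHeartbeats 2000000 in
set_option synthInstance.maxHeartbeats 1000000 in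
open GL2aux in
/-- **The algebra `B_{G∨}` for `G∨ = GL₂`.**
Let `W = {1, s} ≅ ℤ/2` act on `X = ℤ² = ℤε₁ ⊕ ℤε₂` by swapping the coordinates, let
`F` act on `ℤ[X]^W` by `e(λ) ↦ e(qλ)`, and let `I ⊆ ℤ[X]^W` be the ideal generated by
`{F f − f}`.  Then `B = ℤ[X]^W/I` is a free `ℤ`-module of rank `q(q−1)`, with basis
`{ r((i+j)ε₁ + jε₂) + I : 0 ≤ i ≤ q−1, 0 ≤ j ≤ q−2 }`. -/
theorem stmt17 (q : ℕ) (hq : 2 ≤ q)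
    (F : glInv →ₐ[ℤ] glInv)
    (hF : ∀ f : glInv, (F f : AddMonoidAlgebra ℤ (ℤ × ℤ)) =
      AddMonoidAlgebra.ofCoeff (Finsupp.mapDomain (fun l : ℤ × ℤ => (q : ℤ) • l) (f : AddMonoidAlgebra ℤ (ℤ × ℤ)).coeff))
    (I : Ideal glInv) (hI : I = Ideal.span {x : glInv | ∃ f : glInv, x = F f - f})
    (hmem : ∀ l : ℤ × ℤ, glR l ∈ glInv) :
    Module.Free ℤ (glInv ⧸ I) ∧
    ∃ b : Module.Basis (Fin q × Fin (q - 1)) ℤ (glInv ⧸ I),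
      ∀ ij : Fin q × Fin (q - 1),
        b ij = Ideal.Quotient.mk I
          ⟨glR (((ij.1 : ℕ) + (ij.2 : ℕ) : ℤ), ((ij.2 : ℕ) : ℤ)), hmem _⟩ := by
  classical
  set v : Fin q × Fin (q - 1) → glInv ⧸ I := fun ij => Ideal.Quotient.mk I
    ⟨glR (((ij.1 : ℕ) + (ij.2 : ℕ) : ℤ), ((ij.2 : ℕ) : ℤ)), hmem _⟩ with hv
  have memI : ∀ f : glInv, F f - f ∈ I := fun f => hI ▸ Ideal.subset_span ⟨f, rfl⟩
  have hFE1 : F (Ee 1) = Ee (q : ℤ) := by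
    apply Subtype.ext
    rw [hF]
    show AddMonoidAlgebra.ofCoeff (Finsupp.mapDomain (fun l : ℤ × ℤ => (q : ℤ) • l)
      (Finsupp.single ((1:ℤ),(1:ℤ)) 1)) = AddMonoidAlgebra.ofCoeff (Finsupp.single ((q:ℤ),(q:ℤ)) 1)
    rw [Finsupp.mapDomain_single]
    congr 2
    simp [Prod.smul_def]
  have hFP : F (Hh 1) = Hh q := by
    apply Subtype.ext
    rw [hF]
    show AddMonoidAlgebra.ofCoeff (Finsupp.mapDomain (fun l : ℤ × ℤ => (q : ℤ) • l)
        (Finsupp.single (((1:ℕ):ℤ),(0:ℤ)) 1 + Finsupp.single ((0:ℤ),((1:ℕ):ℤ)) 1))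
      = AddMonoidAlgebra.ofCoeff (Finsupp.single (((q:ℕ):ℤ),(0:ℤ)) 1 + Finsupp.single ((0:ℤ),((q:ℕ):ℤ)) 1)
    rw [Finsupp.mapDomain_add, Finsupp.mapDomain_single, Finsupp.mapDomain_single]
    congr 3 <;> simp [Prod.smul_def]
  have B3 : Ideal.Quotient.mk I (Hh q) = Ideal.Quotient.mk I (Hh 1) := by
    apply Ideal.Quotient.eq.mpr
    rw [← hFP]
    exact memI (Hh 1)
  have shiftE : ∀ b : ℤ, Ideal.Quotient.mk I (Ee (b + ((q:ℤ) - 1)))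
      = Ideal.Quotient.mk I (Ee b) := by
    intro b
    apply Ideal.Quotient.eq.mpr
    have h : Ee (b + ((q:ℤ)-1)) - Ee b = Ee (b-1) * (F (Ee 1) - Ee 1) := by
      rw [hFE1, mul_sub, Ee_mul, Ee_mul]
      congr 2 <;> ring
    rw [h]
    exact Ideal.mul_mem_left _ _ (memI (Ee 1))
  have key_shift : ∀ k : ℤ, ∀ c : ℤ, Ideal.Quotient.mk I (Ee (c + ((q:ℤ)-1) * k))
      = Ideal.Quotient.mk I (Ee c) := by
    intro k
    induction k using Int.induction_on with
    | zero => intro c; norm_num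
    | succ k ih =>
      intro c
      have h : c + ((q:ℤ)-1)*((k:ℤ)+1) = (c + ((q:ℤ)-1)*(k:ℤ)) + ((q:ℤ)-1) := by ring
      rw [h, shiftE, ih]
    | pred k ih =>
      intro c
      have h : c + ((q:ℤ)-1)*(-(k:ℤ)-1) = (c - ((q:ℤ)-1)) + ((q:ℤ)-1)*(-(k:ℤ)) := by ring
      rw [h, ih]
      have h2 := shiftE (c - ((q:ℤ)-1))
      rw [sub_add_cancel] at h2
      exact h2.symm
  have repE : ∀ b : ℤ, ∃ j : Fin (q-1), Ideal.Quotient.mk I (Ee b)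
      = Ideal.Quotient.mk I (Ee ((j:ℕ):ℤ)) := by
    intro b
    have hm : (0:ℤ) < (q:ℤ)-1 := by
      have := hq
      omega
    have hnn := Int.emod_nonneg b (by omega : ((q:ℤ)-1) ≠ 0)
    have hlt := Int.emod_lt_of_pos b hm
    refine ⟨⟨(b % ((q:ℤ)-1)).toNat, by omega⟩, ?_⟩
    have hcast : (((b % ((q:ℤ)-1)).toNat : ℕ) : ℤ) = b % ((q:ℤ)-1) := Int.toNat_of_nonneg hnn
    have hb : b = (b % ((q:ℤ)-1)) + ((q:ℤ)-1) * (b / ((q:ℤ)-1)) := by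
      rw [add_comm]
      exact (Int.mul_ediv_add_emod b _).symm
    calc Ideal.Quotient.mk I (Ee b)
        = Ideal.Quotient.mk I (Ee ((b % ((q:ℤ)-1)) + ((q:ℤ)-1) * (b / ((q:ℤ)-1)))) := by
          rw [← hb]
      _ = Ideal.Quotient.mk I (Ee (b % ((q:ℤ)-1))) := key_shift _ _
      _ = _ := by rw [hcast]
  have vE : ∀ (j : Fin (q-1)), v (⟨0, by omega⟩, j) = Ideal.Quotient.mk I (Ee ((j:ℕ):ℤ)) := by
    intro j
    show Ideal.Quotient.mk I (Rho ((((0:ℕ):ℤ) + ((j:ℕ):ℤ)), ((j:ℕ):ℤ))) = _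
    rw [show (((0:ℕ):ℤ) + ((j:ℕ):ℤ)) = ((j:ℕ):ℤ) from by norm_num, Rho_diag]
  have hEspan : ∀ b : ℤ, Ideal.Quotient.mk I (Ee b) ∈ Submodule.span ℤ (Set.range v) := by
    intro b
    obtain ⟨j, hj⟩ := repE b
    rw [hj, ← vE j]
    exact Submodule.subset_span ⟨_, rfl⟩
  have vH : ∀ (i : Fin q) (j : Fin (q-1)), 1 ≤ (i:ℕ) →
      v (i, j) = Ideal.Quotient.mk I (Ee ((j:ℕ):ℤ) * Hh (i:ℕ)) := by
    intro i j hi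
    show Ideal.Quotient.mk I (Rho ((((i:ℕ):ℤ) + ((j:ℕ):ℤ)), ((j:ℕ):ℤ))) = _
    rw [Ee_mul_Hh ((j:ℕ):ℤ) (i:ℕ) hi]
    congr 2
    ring
  have Q : ∀ d : ℕ, ∀ b : ℤ, Ideal.Quotient.mk I (Ee b * Hh d)
      ∈ Submodule.span ℤ (Set.range v) := by
    intro d
    induction d using Nat.strong_induction_on with
    | _ d ih =>
      intro b
      by_cases hd0 : d = 0
      · subst hd0
        have h2 : Ee b * Hh 0 = Ee b + Ee b := by rw [Hh_zero, mul_two]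
        rw [h2, map_add]
        exact Submodule.add_mem _ (hEspan b) (hEspan b)
      by_cases hdq : d < q
      · obtain ⟨j, hj⟩ := repE b
        have hmkmul : Ideal.Quotient.mk I (Ee b * Hh d)
            = Ideal.Quotient.mk I (Ee ((j:ℕ):ℤ) * Hh d) := by
          rw [map_mul, map_mul, hj]
        rw [hmkmul, ← vH ⟨d, hdq⟩ j (by show (1:ℕ) ≤ d; omega)]
        exact Submodule.subset_span ⟨_, rfl⟩
      · push_neg at hdq
        set n := d - q with hn
        by_cases hn0 : n = 0
        · have : Ideal.Quotient.mk I (Ee b * Hh d) = Ideal.Quotient.mk I (Ee b * Hh 1) := by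
            rw [map_mul, map_mul, show d = q from by omega, B3]
          rw [this]
          exact ih 1 (by omega) b
        · have hn1 : 1 ≤ n := by omega
          have hMN : max n q + min n q = d := by
            rw [max_add_min]
            omega
          have hrel1 : Hh (max n q) * Hh (min n q)
              = Hh d + Ee ((min n q : ℕ) : ℤ) * Hh (max n q - min n q) := by
            rw [Hh_mul _ _ (min_le_max), hMN]
          have hcomm : Ideal.Quotient.mk I (Hh (max n q) * Hh (min n q))
              = Ideal.Quotient.mk I (Hh n * Hh q) := by
            rcases le_total n q with h | h
            · rw [max_eq_right h, min_eq_left h, mul_comm]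
            · rw [max_eq_left h, min_eq_right h]
          have hq1 : Ideal.Quotient.mk I (Hh n * Hh q)
              = Ideal.Quotient.mk I (Hh (n+1) + Ee 1 * Hh (n-1)) := by
            rw [map_mul, B3, ← map_mul, Hh_mul n 1 hn1]
            norm_num
          have e2 : Ee b * Hh d = Ee b * (Hh (max n q) * Hh (min n q))
              - Ee (b + ((min n q : ℕ):ℤ)) * Hh (max n q - min n q) := by
            rw [hrel1, ← Ee_mul b ((min n q : ℕ):ℤ)]
            ring
          have e3 : Ee b * (Hh (n+1) + Ee 1 * Hh (n-1))
              = Ee b * Hh (n+1) + Ee (b+1) * Hh (n-1) := by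
            rw [mul_add, ← mul_assoc, Ee_mul]
          have key : Ideal.Quotient.mk I (Ee b * Hh d)
              = (Ideal.Quotient.mk I (Ee b * Hh (n+1))
                  + Ideal.Quotient.mk I (Ee (b+1) * Hh (n-1)))
                - Ideal.Quotient.mk I (Ee (b + ((min n q : ℕ):ℤ)) * Hh (max n q - min n q)) := by
            calc Ideal.Quotient.mk I (Ee b * Hh d)
                = Ideal.Quotient.mk I (Ee b * (Hh (max n q) * Hh (min n q)))
                  - Ideal.Quotient.mk I (Ee (b + ((min n q : ℕ):ℤ))
                    * Hh (max n q - min n q)) := by rw [e2, map_sub]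
              _ = Ideal.Quotient.mk I (Ee b) * Ideal.Quotient.mk I (Hh (max n q) * Hh (min n q))
                  - Ideal.Quotient.mk I (Ee (b + ((min n q : ℕ):ℤ))
                    * Hh (max n q - min n q)) := by rw [map_mul]
              _ = Ideal.Quotient.mk I (Ee b)
                    * Ideal.Quotient.mk I (Hh (n+1) + Ee 1 * Hh (n-1))
                  - Ideal.Quotient.mk I (Ee (b + ((min n q : ℕ):ℤ))
                    * Hh (max n q - min n q)) := by rw [hcomm, hq1]
              _ = (Ideal.Quotient.mk I (Ee b * Hh (n+1))
                    + Ideal.Quotient.mk I (Ee (b+1) * Hh (n-1)))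
                  - Ideal.Quotient.mk I (Ee (b + ((min n q : ℕ):ℤ))
                    * Hh (max n q - min n q)) := by rw [← map_mul, e3, map_add]
          rw [key]
          have hlt1 : n + 1 < d := by omega
          have hlt2 : n - 1 < d := by omega
          have hlt3 : max n q - min n q < d := by omega
          exact Submodule.sub_mem _
            (Submodule.add_mem _ (ih (n+1) hlt1 b) (ih (n-1) hlt2 (b+1)))
            (ih (max n q - min n q) hlt3 _)
  have KEY' : ∀ a b : ℤ, b ≤ a → Ideal.Quotient.mk I (Rho (a, b))
      ∈ Submodule.span ℤ (Set.range v) := by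
    intro a b h
    rcases eq_or_lt_of_le h with he | hlt
    · rw [← he, Rho_diag]
      exact hEspan b
    · have hd1 : 1 ≤ (a - b).toNat := by omega
      have hab : (a, b) = ((b + ((a-b).toNat : ℤ)), b) := by
        rw [Prod.mk.injEq]
        constructor
        · omega
        · rfl
      rw [hab, ← Ee_mul_Hh b ((a-b).toNat) hd1]
      exact Q _ b
  have KEY : ∀ l : ℤ × ℤ, Ideal.Quotient.mk I (Rho l)
      ∈ Submodule.span ℤ (Set.range v) := by
    intro l
    rcases le_total l.2 l.1 with h | h
    · have : l = (l.1, l.2) := rfl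
      rw [this]
      exact KEY' l.1 l.2 h
    · have : Rho l = Rho (l.2, l.1) := by
        rw [show l = (l.1, l.2) from rfl, Rho_swap]
      rw [this]
      exact KEY' l.2 l.1 h
  have SPAN : ⊤ ≤ Submodule.span ℤ (Set.range v) := by
    intro x _
    obtain ⟨y, rfl⟩ := Ideal.Quotient.mk_surjective x
    have h1 := mem_span_rho y
    have h2 : Ideal.Quotient.mk I y ∈ Submodule.map (Ideal.Quotient.mkₐ ℤ I).toLinearMap
        (Submodule.span ℤ (Set.range Rho)) := ⟨y, h1, rfl⟩
    rw [Submodule.map_span] at h2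
    refine Submodule.span_le.mpr ?_ h2
    rintro z ⟨w, ⟨l, rfl⟩, rfl⟩
    exact KEY l
  -- independence
  have CFE : ∀ f : glInv, psigl q hq ((F f : AddMonoidAlgebra ℤ (ℤ × ℤ)))
      = psigl q hq ((f : AddMonoidAlgebra ℤ (ℤ × ℤ))) := by
    intro f
    rw [hF f]
    have heq : Set.EqOn
        ((psigl q hq).toLinearMap ∘ₗ AddMonoidAlgebra.mapDomainLinearMap ℤ ℤ (fun l : ℤ×ℤ => (q:ℤ) • l))
        (psigl q hq).toLinearMap (Set.range glR) := by
      rintro x ⟨l, rfl⟩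
      simp only [LinearMap.comp_apply, AlgHom.toLinearMap_apply]
      show psigl q hq (AddMonoidAlgebra.ofCoeff (Finsupp.mapDomain (fun l : ℤ×ℤ => (q:ℤ) • l) (glR l).coeff))
        = psigl q hq (glR l)
      rw [mapDomain_glR q (by omega) l]
      exact CFE' q hq l
    have := LinearMap.eqOn_span heq
      (span_aux _ (f : AddMonoidAlgebra ℤ (ℤ × ℤ)) (mem_glInv.mp f.2) le_rfl)
    exact this
  have hker : ∀ a ∈ I, ((psigl q hq).comp glInv.val).toRingHom a = 0 := by
    intro a ha
    rw [hI] at ha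
    have hle : Ideal.span {x : glInv | ∃ f : glInv, x = F f - f}
        ≤ RingHom.ker ((psigl q hq).comp glInv.val).toRingHom := by
      apply Ideal.span_le.mpr
      rintro x ⟨f, rfl⟩
      rw [SetLike.mem_coe, RingHom.mem_ker]
      show psigl q hq ((F f - f : glInv) : AddMonoidAlgebra ℤ (ℤ × ℤ)) = 0
      have hsub : ((F f - f : glInv) : AddMonoidAlgebra ℤ (ℤ × ℤ))
          = ((F f : glInv) : AddMonoidAlgebra ℤ (ℤ × ℤ)) - (f : AddMonoidAlgebra ℤ (ℤ × ℤ)) := rfl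
      rw [hsub, map_sub, CFE f, sub_self]
    exact hle ha
  set χq := Ideal.Quotient.lift I ((psigl q hq).comp glInv.val).toRingHom hker with hχq
  have χqv : ∀ x : glInv, χq (Ideal.Quotient.mk I x)
      = psigl q hq ((x : AddMonoidAlgebra ℤ (ℤ × ℤ))) := by
    intro x
    rw [hχq, Ideal.Quotient.lift_mk]
    rfl
  set Φ : (glInv ⧸ I) →ₗ[ℤ] ((Fin q × Fin (q-1)) → ℤ) := LinearMap.pi (fun p =>
    (coordθ q hq p).toIntLinearMap
      ∘ₗ (LinearMap.mulLeft ℤ ((Xu q hq ^ (q-1) : (Dgl q)ˣ) : Dgl q))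
      ∘ₗ χq.toIntAlgHom.toLinearMap) with hΦdef
  have hΦ : ∀ p' : Fin q × Fin (q-1), Φ (v p') = Pi.single p' (1:ℤ) := by
    rintro ⟨i, j⟩
    funext p
    have h1 : Φ (v (i, j)) p = coordθ q hq p (((Xu q hq ^ (q-1) : (Dgl q)ˣ) : Dgl q)
        * χq (Ideal.Quotient.mk I ⟨glR ((((i,j).1 : ℕ) + ((i,j).2 : ℕ) : ℤ), (((i,j).2 : ℕ) : ℤ)),
          hmem _⟩)) := rfl
    rw [h1, χqv]
    have h2 : ((⟨glR ((((i,j).1 : ℕ) + ((i,j).2 : ℕ) : ℤ), (((i,j).2 : ℕ) : ℤ)), hmem _⟩ : glInv) :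
        AddMonoidAlgebra ℤ (ℤ × ℤ)) = glR ((((i : ℕ) : ℤ) + ((j : ℕ) : ℤ)), ((j : ℕ) : ℤ)) := rfl
    rw [h2, coord_eval q hq p i j]
    rw [Pi.single_apply]
  have hsingle_indep : LinearIndependent ℤ
      (fun p' : Fin q × Fin (q-1) => Pi.single p' (1:ℤ)) := by
    have := (Pi.basisFun ℤ (Fin q × Fin (q-1))).linearIndependent
    have hcoe : ⇑(Pi.basisFun ℤ (Fin q × Fin (q-1)))
        = fun p' : Fin q × Fin (q-1) => Pi.single p' (1:ℤ) := by
      funext p'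
      simp
    rwa [hcoe] at this
  have hind : LinearIndependent ℤ v := by
    apply LinearIndependent.of_comp Φ
    have : Φ ∘ v = fun p' : Fin q × Fin (q-1) => Pi.single p' (1:ℤ) := funext hΦ
    rw [this]
    exact hsingle_indep
  let bb : Module.Basis (Fin q × Fin (q - 1)) ℤ (glInv ⧸ I) := Module.Basis.mk hind SPAN
  exact ⟨Module.Free.of_basis bb, bb, fun ij => Module.Basis.mk_apply hind SPAN ij⟩

end
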